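/- Let n ≥ 2, let K be a convex body in ℝⁿ, let ε > 0 be such that ε·Dₙ is contained in the interior of K, and let q be a real number with 0 < q ≤ n. Then there exists η > 0 such that every nonempty compact convex set P ⊂ ℝⁿ that does not contain ε·Dₙ satisfies ∫_{K∖P} ‖x‖^{q−n} dx ≥ η. -/

import Mathlib

open MeasureTheory Metric Set

/-- Integrability of `‖x‖ ^ s` on a ball in `ℝⁿ` for `-n < s ≤ 0`. -/
lemma aux_integrableOn_rpow_norm {n : ℕ} {s R : ℝ} (hs : -(n : ℝ) < s) (hs0 : s ≤ 0) :
    IntegrableOn (fun x : EuclideanSpace ℝ (Fin n) => ‖x‖ ^ s)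
      (Metric.closedBall 0 R) := by
  rcases hs0.lt_or_eq with hneg | rfl
  · -- `s < 0`
    have hmeas : Measurable fun x : EuclideanSpace ℝ (Fin n) => ‖x‖ ^ s :=
      measurable_norm.pow_const s
    constructor
    · exact hmeas.aestronglyMeasurable
    · rw [hasFiniteIntegral_iff_ofReal
        (Filter.Eventually.of_forall fun x => Real.rpow_nonneg (norm_nonneg x) s)]
      rw [lintegral_eq_lintegral_meas_le _
        (Filter.Eventually.of_forall fun x => Real.rpow_nonneg (norm_nonneg x) s)
        hmeas.aemeasurable]
      have key : ∀ t : ℝ, 0 < t →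
          {a : EuclideanSpace ℝ (Fin n) | t ≤ ‖a‖ ^ s} ⊆
            Metric.closedBall 0 (t ^ s⁻¹) := by
        intro t ht x hx
        simp only [Set.mem_setOf_eq] at hx
        have hx0 : x ≠ 0 := by
          rintro rfl
          rw [norm_zero, Real.zero_rpow hneg.ne] at hx
          linarith
        have hxn : (0 : ℝ) < ‖x‖ := norm_pos_iff.2 hx0
        have h2 := Real.rpow_le_rpow_of_nonpos ht hx
          (le_of_lt (inv_neg''.2 hneg))
        rw [← Real.rpow_mul (norm_nonneg x), mul_inv_cancel₀ hneg.ne,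
          Real.rpow_one] at h2
        exact mem_closedBall_zero_iff.2 h2
      have hb : ∀ t : ℝ,
          (volume.restrict (Metric.closedBall (0 : EuclideanSpace ℝ (Fin n)) R))
            {a | t ≤ ‖a‖ ^ s} ≤ volume (Metric.closedBall (0 : EuclideanSpace ℝ (Fin n)) R) :=
        fun t => (measure_mono (Set.subset_univ _)).trans_eq
          (Measure.restrict_apply_univ _)
      have hnpos : (0 : ℝ) < n := by
        by_contra h
        push_neg at h
        have : (n : ℝ) = 0 := le_antisymm h (Nat.cast_nonneg n)
        rw [this] at hs; linarith
      have hlt : s⁻¹ * (n : ℝ) < -1 := by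
        rw [mul_comm, ← div_eq_mul_inv, div_lt_iff_of_neg hneg]
        linarith
      calc ∫⁻ t in Set.Ioi (0:ℝ),
              (volume.restrict (Metric.closedBall (0 : EuclideanSpace ℝ (Fin n)) R))
                {a | t ≤ ‖a‖ ^ s}
          ≤ ∫⁻ t in Set.Ioc (0:ℝ) 1 ∪ Set.Ioi 1,
              (volume.restrict (Metric.closedBall (0 : EuclideanSpace ℝ (Fin n)) R))
                {a | t ≤ ‖a‖ ^ s} := lintegral_mono_set Set.Ioi_subset_Ioc_union_Ioi
        _ ≤ (∫⁻ t in Set.Ioc (0:ℝ) 1,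
              (volume.restrict (Metric.closedBall (0 : EuclideanSpace ℝ (Fin n)) R))
                {a | t ≤ ‖a‖ ^ s}) +
            ∫⁻ t in Set.Ioi (1:ℝ),
              (volume.restrict (Metric.closedBall (0 : EuclideanSpace ℝ (Fin n)) R))
                {a | t ≤ ‖a‖ ^ s} := lintegral_union_le _ _ _
        _ < ⊤ := by
            refine ENNReal.add_lt_top.2 ⟨?_, ?_⟩
            · calc ∫⁻ t in Set.Ioc (0:ℝ) 1,
                    (volume.restrict (Metric.closedBall (0 : EuclideanSpace ℝ (Fin n)) R))
                      {a | t ≤ ‖a‖ ^ s}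
                  ≤ ∫⁻ _ in Set.Ioc (0:ℝ) 1,
                      volume (Metric.closedBall (0 : EuclideanSpace ℝ (Fin n)) R) :=
                    lintegral_mono fun t => hb t
                _ = volume (Metric.closedBall (0 : EuclideanSpace ℝ (Fin n)) R)
                      * volume (Set.Ioc (0:ℝ) 1) := by
                    rw [setLIntegral_const]
                _ < ⊤ := ENNReal.mul_lt_top measure_closedBall_lt_top
                    (by simp [Real.volume_Ioc])
            · have hb2 : ∀ t ∈ Set.Ioi (1:ℝ),
                  (volume.restrict (Metric.closedBall (0 : EuclideanSpace ℝ (Fin n)) R))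
                    {a | t ≤ ‖a‖ ^ s}
                  ≤ ENNReal.ofReal (t ^ (s⁻¹ * (n:ℝ)))
                      * volume (Metric.ball (0 : EuclideanSpace ℝ (Fin n)) 1) := by
                intro t ht
                have ht0 : (0:ℝ) < t := lt_trans one_pos ht
                calc (volume.restrict (Metric.closedBall (0 : EuclideanSpace ℝ (Fin n)) R))
                      {a | t ≤ ‖a‖ ^ s}
                    ≤ volume {a : EuclideanSpace ℝ (Fin n) | t ≤ ‖a‖ ^ s} :=
                      Measure.restrict_apply_le _ _
                  _ ≤ volume (Metric.closedBall (0 : EuclideanSpace ℝ (Fin n)) (t ^ s⁻¹)) :=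
                      measure_mono (key t ht0)
                  _ = ENNReal.ofReal ((t ^ s⁻¹) ^ (Module.finrank ℝ (EuclideanSpace ℝ (Fin n))))
                        * volume (Metric.ball (0 : EuclideanSpace ℝ (Fin n)) 1) :=
                      Measure.addHaar_closedBall _ _ (Real.rpow_nonneg ht0.le _)
                  _ = ENNReal.ofReal (t ^ (s⁻¹ * (n:ℝ)))
                        * volume (Metric.ball (0 : EuclideanSpace ℝ (Fin n)) 1) := by
                      rw [finrank_euclideanSpace, Fintype.card_fin,
                        ← Real.rpow_natCast (t ^ s⁻¹) n, ← Real.rpow_mul ht0.le]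
              calc ∫⁻ t in Set.Ioi (1:ℝ),
                    (volume.restrict (Metric.closedBall (0 : EuclideanSpace ℝ (Fin n)) R))
                      {a | t ≤ ‖a‖ ^ s}
                  ≤ ∫⁻ t in Set.Ioi (1:ℝ), ENNReal.ofReal (t ^ (s⁻¹ * (n:ℝ)))
                      * volume (Metric.ball (0 : EuclideanSpace ℝ (Fin n)) 1) :=
                    setLIntegral_mono' measurableSet_Ioi hb2
                _ = (∫⁻ t in Set.Ioi (1:ℝ), ENNReal.ofReal (t ^ (s⁻¹ * (n:ℝ))))
                      * volume (Metric.ball (0 : EuclideanSpace ℝ (Fin n)) 1) :=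
                    lintegral_mul_const' _ _ measure_ball_lt_top.ne
                _ < ⊤ := ENNReal.mul_lt_top
                    ((integrableOn_Ioi_rpow_of_lt hlt one_pos).setLIntegral_lt_top)
                    measure_ball_lt_top
  · -- `s = 0`
    simp only [Real.rpow_zero]
    exact integrableOn_const measure_closedBall_lt_top.ne

open MeasureTheory

set_option maxHeartbeats 1000000 in
/-- Let `K ⊆ ℝⁿ` (`n ≥ 2`) be a convex body, let `ε > 0` be such that `ε·Dₙ` is
contained in the interior of `K`, and let `0 < q ≤ n`. Then there is `η > 0` such that
every nonempty compact convex set `P ⊆ ℝⁿ` not containing `ε·Dₙ` satisfies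
`∫_{K \ P} ‖x‖^{q-n} dx ≥ η`. -/
theorem stmt2 {n : ℕ} (hn : 2 ≤ n)
    (K : Set (EuclideanSpace ℝ (Fin n)))
    (hKcp : IsCompact K) (hKcv : Convex ℝ K) (hKint : (interior K).Nonempty)
    (ε : ℝ) (hε : 0 < ε)
    (hball : Metric.closedBall (0 : EuclideanSpace ℝ (Fin n)) ε ⊆ interior K)
    (q : ℝ) (hq0 : 0 < q) (hqn : q ≤ n) :
    ∃ η > (0 : ℝ), ∀ P : Set (EuclideanSpace ℝ (Fin n)),
      P.Nonempty → IsCompact P → Convex ℝ P →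
      ¬ Metric.closedBall (0 : EuclideanSpace ℝ (Fin n)) ε ⊆ P →
      η ≤ ∫ x in K \ P, ‖x‖ ^ (q - (n : ℝ)) := by
  classical
  -- enlarge the ball inside K
  obtain ⟨δ, hδ, hδsub⟩ := (isCompact_closedBall (0 : EuclideanSpace ℝ (Fin n)) ε).exists_cthickening_subset_open
    isOpen_interior hball
  have hthick : Metric.cthickening δ (Metric.closedBall (0 : EuclideanSpace ℝ (Fin n)) ε)
      = Metric.closedBall (0 : EuclideanSpace ℝ (Fin n)) (ε + δ) := by
    rw [cthickening_closedBall hδ.le hε.le, add_comm]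
  set ε' : ℝ := ε + δ with hε'def
  have hε'pos : 0 < ε' := by positivity
  have hεε' : ε < ε' := by simp [hε'def, hδ]
  have hsubK : Metric.closedBall (0 : EuclideanSpace ℝ (Fin n)) ε' ⊆ K := by
    rw [← hthick]
    exact hδsub.trans interior_subset
  -- bound K by a big ball
  obtain ⟨R₀, hR₀⟩ := hKcp.isBounded.subset_closedBall 0
  set R : ℝ := max R₀ ε'
  have hKR : K ⊆ Metric.closedBall (0 : EuclideanSpace ℝ (Fin n)) R :=
    hR₀.trans (Metric.closedBall_subset_closedBall (le_max_left _ _))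
  -- integrability of the weight on the big ball
  have hsexp : -(n:ℝ) < q - n := by linarith
  have hsexp0 : q - (n:ℝ) ≤ 0 := by linarith
  have hInt : IntegrableOn (fun x : EuclideanSpace ℝ (Fin n) => ‖x‖ ^ (q - (n:ℝ))) (Metric.closedBall 0 R) :=
    aux_integrableOn_rpow_norm hsexp hsexp0
  -- the value of η
  set η : ℝ := ε' ^ (q - (n:ℝ)) * (volume (Metric.closedBall (0 : EuclideanSpace ℝ (Fin n)) (δ/2))).toReal with hηdef
  have hvolpos : 0 < (volume (Metric.closedBall (0 : EuclideanSpace ℝ (Fin n)) (δ/2))).toReal :=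
    ENNReal.toReal_pos
      (ne_of_gt ((measure_ball_pos volume 0 (half_pos hδ)).trans_le
        (measure_mono Metric.ball_subset_closedBall)))
      measure_closedBall_lt_top.ne
  refine ⟨η, by positivity, fun P hPne hPcp hPcv hP => ?_⟩
  -- separate a point of the ε-ball from P
  obtain ⟨z, hzball, hzP⟩ := Set.not_subset.mp hP
  obtain ⟨f, u, hfP, hfz⟩ := geometric_hahn_banach_closed_point hPcv hPcp.isClosed hzP
  obtain ⟨a, ha⟩ := hPne
  have hf0 : f ≠ 0 := by
    rintro rfl
    have h1 : (0:ℝ) < u := hfP a ha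
    have h2 : u < 0 := hfz
    linarith
  have hfn : (0:ℝ) < ‖f‖ := norm_pos_iff.2 hf0
  set w : EuclideanSpace ℝ (Fin n) := (InnerProductSpace.toDual ℝ (EuclideanSpace ℝ (Fin n))).symm f with hwdef
  have hwnorm : ‖w‖ = ‖f‖ := LinearIsometryEquiv.norm_map _ f
  have hfw : ∀ x : EuclideanSpace ℝ (Fin n), f x = inner ℝ w x := fun x =>
    (InnerProductSpace.toDual_symm_apply).symm
  set m : ℝ := ε + δ/2 with hm
  set c : EuclideanSpace ℝ (Fin n) := (m / ‖f‖) • w with hcdef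
  -- the small ball B
  set B : Set (EuclideanSpace ℝ (Fin n)) := Metric.closedBall c (δ/2) with hBdef
  have hcnorm : ‖c‖ = m := by
    rw [hcdef, norm_smul, hwnorm, Real.norm_eq_abs,
      abs_of_nonneg (by positivity : (0:ℝ) ≤ m / ‖f‖), div_mul_cancel₀ _ hfn.ne']
  have hfc : f c = m * ‖f‖ := by
    rw [hfw, hcdef, real_inner_smul_right, real_inner_self_eq_norm_sq, hwnorm]
    field_simp
  -- properties of points in B
  have hBprop : ∀ x ∈ B, ε ≤ ‖x‖ ∧ ‖x‖ ≤ ε' ∧ x ∈ K ∧ x ∉ P := by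
    intro x hx
    rw [hBdef, Metric.mem_closedBall, dist_eq_norm] at hx
    have hxle : ‖x‖ ≤ ε' := by
      calc ‖x‖ = ‖x - c + c‖ := by rw [sub_add_cancel]
        _ ≤ ‖x - c‖ + ‖c‖ := norm_add_le _ _
        _ ≤ δ/2 + m := add_le_add hx (le_of_eq hcnorm)
        _ = ε' := by simp [hε'def, m]; ring
    have hfx : ε * ‖f‖ ≤ f x := by
      have h1 : f x = f c + f (x - c) := by
        rw [← map_add]; congr 1; abel
      have h2 : |f (x - c)| ≤ ‖f‖ * ‖x - c‖ := f.le_opNorm _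
      have h3 : ‖f‖ * ‖x - c‖ ≤ ‖f‖ * (δ/2) := by
        exact mul_le_mul_of_nonneg_left hx hfn.le
      have h4 : -(‖f‖ * (δ/2)) ≤ f (x - c) := by
        have := neg_abs_le (f (x - c))
        nlinarith [abs_nonneg (f (x-c))]
      rw [h1, hfc, hm]
      linarith [mul_comm ‖f‖ (δ/2)]
    have hxP : x ∉ P := by
      intro hxmem
      have h5 : f x < u := hfP x hxmem
      have h6 : u < f z := hfz
      have h7 : f z ≤ ‖f‖ * ‖z‖ := le_trans (le_abs_self _) (f.le_opNorm z)
      have h8 : ‖z‖ ≤ ε := mem_closedBall_zero_iff.1 hzball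
      have h9 : ‖f‖ * ‖z‖ ≤ ‖f‖ * ε := mul_le_mul_of_nonneg_left h8 hfn.le
      have h10 : ε * ‖f‖ = ‖f‖ * ε := mul_comm _ _
      linarith
    have hxge : ε ≤ ‖x‖ := by
      have h7 : f x ≤ ‖f‖ * ‖x‖ := le_trans (le_abs_self _) (f.le_opNorm x)
      have h11 : ε * ‖f‖ ≤ ‖x‖ * ‖f‖ := by linarith [mul_comm ‖f‖ ‖x‖]
      exact le_of_mul_le_mul_right h11 hfn
    exact ⟨hxge, hxle, hsubK (mem_closedBall_zero_iff.2 hxle), hxP⟩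
  have hBsub : B ⊆ K \ P := fun x hx =>
    ⟨(hBprop x hx).2.2.1, (hBprop x hx).2.2.2⟩
  -- integrability facts
  have hIntKP : IntegrableOn (fun x : EuclideanSpace ℝ (Fin n) => ‖x‖ ^ (q - (n:ℝ))) (K \ P) :=
    hInt.mono_set ((Set.diff_subset).trans hKR)
  have hIntB : IntegrableOn (fun x : EuclideanSpace ℝ (Fin n) => ‖x‖ ^ (q - (n:ℝ))) B :=
    hIntKP.mono_set hBsub
  -- lower bounds
  have step1 : ∫ x in B, ‖x‖ ^ (q - (n:ℝ)) ≤ ∫ x in K \ P, ‖x‖ ^ (q - (n:ℝ)) := by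
    refine setIntegral_mono_set hIntKP ?_ (HasSubset.Subset.eventuallyLE hBsub)
    exact Filter.Eventually.of_forall fun x => Real.rpow_nonneg (norm_nonneg x) _
  have step2 : ∫ x in B, (ε' ^ (q - (n:ℝ))) ≤ ∫ x in B, ‖x‖ ^ (q - (n:ℝ)) := by
    refine setIntegral_mono_on (integrableOn_const measure_closedBall_lt_top.ne)
      hIntB (measurableSet_closedBall) ?_
    intro x hx
    obtain ⟨h1, h2, -, -⟩ := hBprop x hx
    exact Real.rpow_le_rpow_of_nonpos (lt_of_lt_of_le hε h1) h2 hsexp0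
  have step3 : ∫ x in B, (ε' ^ (q - (n:ℝ))) = η := by
    rw [setIntegral_const, hBdef, measureReal_def, Measure.addHaar_closedBall_center, smul_eq_mul, hηdef]
    ring
  linarith
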